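/- With μ the triadic doubling measure as above and α in the range 1 − ln(2/(1−δ))/ln 3 < α < 1, the relative α-capacity satisfies Cap_α(E, I) ≥ c μ(E)/μ(I) for every triadic interval I ⊂ [0,1] and compact E ⊂ I; hence μ satisfies the fractional A_∞^α condition with η(t) = Ct. -/

import Mathlib

open MeasureTheory ENNReal

/-- The triadic interval `[j/3^k, (j+1)/3^k)` of generation `k`. -/
def triSet (k j : ℕ) : Set ℝ := Set.Ico ((j : ℝ) / 3 ^ k) (((j : ℝ) + 1) / 3 ^ k)

/-- `μ` is the triadic measure with parameter `δ`: `μ([0,1]) = 1`, the middle triadic child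
gets fraction `δ` of the mass of its parent, and each outer child gets `(1-δ)/2`. -/
def IsTriadicMeasure (μ : Measure ℝ) (δ : ℝ) : Prop :=
  μ (triSet 0 0) = 1 ∧
  ∀ k j : ℕ, j < 3 ^ k →
    μ (triSet (k + 1) (3 * j)) = ENNReal.ofReal ((1 - δ) / 2) * μ (triSet k j) ∧
    μ (triSet (k + 1) (3 * j + 1)) = ENNReal.ofReal δ * μ (triSet k j) ∧
    μ (triSet (k + 1) (3 * j + 2)) = ENNReal.ofReal ((1 - δ) / 2) * μ (triSet k j)

/-- The double `2I` of the triadic interval `triSet k j`: same center, twice the length. -/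
def triDouble (k j : ℕ) : Set ℝ :=
  Set.Ico (((j : ℝ) + 1 / 2) / 3 ^ k - ((3 : ℝ) ^ k)⁻¹)
    (((j : ℝ) + 1 / 2) / 3 ^ k + ((3 : ℝ) ^ k)⁻¹)

/-- The relative `α`-capacity `Cap_α(E; I)` where `S` is `2I` and `d = diam 2I`. -/
noncomputable def capacity (α : ℝ) (E S : Set ℝ) (d : ℝ) : ℝ≥0∞ :=
  ⨅ (h : ℝ → ℝ) (_ : ∀ y, 0 ≤ h y) (_ : Function.support h ⊆ S)
    (_ : ∀ x ∈ E, d ^ (α - 1) ≤ ∫ y, |x - y| ^ (α - 1) * h y),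
    ENNReal.ofReal (∫ y, h y)

namespace Stmt17

lemma triSet_mem {k j : ℕ} {x : ℝ} :
    x ∈ triSet k j ↔ (j : ℝ) ≤ 3 ^ k * x ∧ 3 ^ k * x < (j : ℝ) + 1 := by
  have h3 : (0:ℝ) < 3 ^ k := by positivity
  simp only [triSet, Set.mem_Ico, div_le_iff₀ h3, lt_div_iff₀ h3]
  constructor <;> rintro ⟨a, b⟩ <;> constructor <;> nlinarith

lemma triSet_inj {k j j' : ℕ} {x : ℝ} (h : x ∈ triSet k j) (h' : x ∈ triSet k j') : j = j' := by
  rw [triSet_mem] at h h'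
  have h1 : (j:ℝ) < j' + 1 := lt_of_le_of_lt h.1 h'.2
  have h2 : (j':ℝ) < j + 1 := lt_of_le_of_lt h'.1 h.2
  have h1' : j < j' + 1 := by exact_mod_cast h1
  have h2' : j' < j + 1 := by exact_mod_cast h2
  omega

lemma triSet_subset (k i : ℕ) : triSet (k+1) i ⊆ triSet k (i / 3) := by
  intro x hx
  rw [triSet_mem] at hx ⊢
  obtain ⟨a, b⟩ := hx
  rw [show ((3:ℝ)^(k+1)) = 3 * 3^k by ring] at a b
  have e1 : 3 * (i / 3) ≤ i := by omega
  have e2 : i + 1 ≤ 3 * (i / 3) + 3 := by omega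
  have e1' : 3 * ((i/3 : ℕ):ℝ) ≤ (i:ℝ) := by exact_mod_cast e1
  have e2' : (i:ℝ) + 1 ≤ 3 * ((i/3:ℕ):ℝ) + 3 := by exact_mod_cast e2
  constructor <;> nlinarith

variable {μ : Measure ℝ} {δ : ℝ}

lemma mu_child_le (hδ : δ < 1/3) (hμ : IsTriadicMeasure μ δ)
    {k j : ℕ} (hj : j < 3^(k+1)) :
    μ (triSet (k+1) j) ≤ ENNReal.ofReal ((1-δ)/2) * μ (triSet k (j/3)) := by
  have e : (3:ℕ)^(k+1) = 3 * 3^k := pow_succ' 3 k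
  have hq : j / 3 < 3 ^ k := by omega
  obtain ⟨h0, h1, h2⟩ := hμ.2 k (j/3) hq
  set q := j / 3 with hqdef
  have hr : j % 3 = 0 ∨ j % 3 = 1 ∨ j % 3 = 2 := by omega
  rcases hr with h | h | h
  · rw [show j = 3 * q by omega]; exact le_of_eq h0
  · rw [show j = 3 * q + 1 by omega, h1]
    exact mul_le_mul_left (ENNReal.ofReal_le_ofReal (by linarith)) _
  · rw [show j = 3 * q + 2 by omega]; exact le_of_eq h2

lemma mu_desc (hδ : δ < 1/3) (hμ : IsTriadicMeasure μ δ)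
    (k : ℕ) : ∀ m i, i < 3^(k+m) →
    i / 3^m < 3^k ∧ triSet (k+m) i ⊆ triSet k (i/3^m) ∧
      μ (triSet (k+m) i) ≤ ENNReal.ofReal (((1-δ)/2)^m) * μ (triSet k (i/3^m)) := by
  intro m
  induction m with
  | zero => intro i hi; simpa using hi
  | succ m ih =>
    intro i hi
    have e : (3:ℕ)^(k+(m+1)) = 3 * 3^(k+m) := pow_succ' 3 (k+m)
    have hi3 : i / 3 < 3^(k+m) := by omega
    obtain ⟨ha, hb, hc⟩ := ih (i/3) hi3
    have hdiv : i / 3 / 3^m = i / 3^(m+1) := by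
      rw [Nat.div_div_eq_div_mul, show 3 * 3^m = 3^(m+1) by ring]
    refine ⟨by rw [← hdiv]; exact ha, ?_, ?_⟩
    · rw [← hdiv]
      exact (triSet_subset (k+m) i).trans hb
    · calc μ (triSet (k+m+1) i) ≤ ENNReal.ofReal ((1-δ)/2) * μ (triSet (k+m) (i/3)) :=
            mu_child_le hδ hμ hi
        _ ≤ ENNReal.ofReal ((1-δ)/2) * (ENNReal.ofReal (((1-δ)/2)^m) * μ (triSet k (i/3/3^m))) :=
            mul_le_mul_right hc _
        _ = ENNReal.ofReal (((1-δ)/2)^(m+1)) * μ (triSet k (i/3^(m+1))) := by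
            rw [hdiv, ← mul_assoc, ← ENNReal.ofReal_mul (by linarith), ← pow_succ']

lemma mu_pos_fin (hδ0 : 0 < δ) (hδ : δ < 1/3)
    (hμ : IsTriadicMeasure μ δ) : ∀ k j, j < 3^k → μ (triSet k j) ≠ 0 ∧ μ (triSet k j) ≠ ⊤ := by
  intro k
  induction k with
  | zero => intro j hj; interval_cases j; rw [hμ.1]; simp
  | succ k ih =>
    intro j hj
    have e : (3:ℕ)^(k+1) = 3 * 3^k := pow_succ' 3 k
    have hq : j / 3 < 3 ^ k := by omega
    obtain ⟨h0, h1, h2⟩ := hμ.2 k (j/3) hq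
    obtain ⟨hne, hfin⟩ := ih (j/3) hq
    have hρ : (0:ℝ) < (1-δ)/2 := by linarith
    set q := j / 3 with hqdef
    have hr : j % 3 = 0 ∨ j % 3 = 1 ∨ j % 3 = 2 := by omega
    rcases hr with h | h | h
    · rw [show j = 3 * q by omega, h0]
      exact ⟨mul_ne_zero (ENNReal.ofReal_pos.2 hρ).ne' hne, ENNReal.mul_ne_top ofReal_ne_top hfin⟩
    · rw [show j = 3 * q + 1 by omega, h1]
      exact ⟨mul_ne_zero (ENNReal.ofReal_pos.2 hδ0).ne' hne, ENNReal.mul_ne_top ofReal_ne_top hfin⟩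
    · rw [show j = 3 * q + 2 by omega, h2]
      exact ⟨mul_ne_zero (ENNReal.ofReal_pos.2 hρ).ne' hne, ENNReal.mul_ne_top ofReal_ne_top hfin⟩

lemma mu_inter_le (hδ : δ < 1/3) (hμ : IsTriadicMeasure μ δ) {k j : ℕ} (hj : j < 3^k) (m i : ℕ) :
    μ (triSet (k+m) i ∩ triSet k j) ≤ ENNReal.ofReal (((1-δ)/2)^m) * μ (triSet k j) := by
  by_cases hne : (triSet (k+m) i ∩ triSet k j).Nonempty
  · obtain ⟨x, hxT, hxI⟩ := hne
    have h3k : (0:ℝ) < 3^k := by positivity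
    have h3n : (0:ℝ) < 3^(k+m) := by positivity
    have hxIm := triSet_mem.1 hxI
    have hxTm := triSet_mem.1 hxT
    have hx1 : x < 1 := by
      have hcast : ((j:ℝ) + 1) ≤ 3^k := by
        have : (j:ℕ) + 1 ≤ 3^k := hj
        exact_mod_cast this
      nlinarith [hxIm.2]
    have hi : i < 3^(k+m) := by
      have : (i:ℝ) < 3^(k+m) := by nlinarith [hxTm.1]
      exact_mod_cast this
    obtain ⟨ha, hb, hc⟩ := mu_desc hδ hμ k m i hi
    have hij : i / 3^m = j := triSet_inj (hb hxT) hxI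
    rw [hij] at hc
    exact le_trans (measure_mono Set.inter_subset_left) hc
  · rw [Set.not_nonempty_iff_eq_empty.1 hne]
    simp

lemma mu_ball_le (hδ : δ < 1/3) (hμ : IsTriadicMeasure μ δ) {k j : ℕ} (hj : j < 3^k)
    (m : ℕ) (y : ℝ) :
    μ ({x : ℝ | |x - y| < ((3:ℝ)^(k+m))⁻¹} ∩ triSet k j)
      ≤ 3 * (ENNReal.ofReal (((1-δ)/2)^m) * μ (triSet k j)) := by
  set n := k + m with hn
  set b : ℤ := ⌊(3:ℝ)^n * y⌋ with hbdef
  have h3n : (0:ℝ) < 3^n := by positivity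
  have cover : {x : ℝ | |x - y| < ((3:ℝ)^n)⁻¹} ∩ triSet k j ⊆
      (triSet n (b-1).toNat ∩ triSet k j) ∪
        ((triSet n b.toNat ∩ triSet k j) ∪ (triSet n (b+1).toNat ∩ triSet k j)) := by
    rintro x ⟨hxy, hxI⟩
    simp only [Set.mem_setOf_eq] at hxy
    have hxIm := triSet_mem.1 hxI
    have hx0 : 0 ≤ x := by
      have h3k : (0:ℝ) < 3^k := by positivity
      have : (0:ℝ) ≤ 3^k * x := le_trans (Nat.cast_nonneg j) hxIm.1
      nlinarith
    set i : ℤ := ⌊(3:ℝ)^n * x⌋ with hidef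
    have hi0 : 0 ≤ i := Int.floor_nonneg.2 (by positivity)
    have hitoNat : ((i.toNat : ℕ) : ℝ) = (i : ℝ) := by
      exact_mod_cast congrArg (Int.cast : ℤ → ℝ) (Int.toNat_of_nonneg hi0)
    have hxi : x ∈ triSet n i.toNat := by
      rw [triSet_mem, hitoNat]
      exact ⟨Int.floor_le _, Int.lt_floor_add_one _⟩
    rw [abs_sub_lt_iff] at hxy
    have hub : (3:ℝ)^n * x ≤ 3^n * y + 1 := by
      have h := hxy.1
      nlinarith [mul_lt_mul_of_pos_left h h3n, mul_inv_cancel₀ h3n.ne']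
    have hlb : (3:ℝ)^n * y ≤ 3^n * x + 1 := by
      have h := hxy.2
      nlinarith [mul_lt_mul_of_pos_left h h3n, mul_inv_cancel₀ h3n.ne']
    have hile : i ≤ b + 1 := by
      have : i ≤ ⌊(3:ℝ)^n * y + 1⌋ := Int.floor_mono hub
      rwa [show ((1:ℝ)) = ((1:ℤ):ℝ) by norm_num, Int.floor_add_intCast] at this
    have hige : b ≤ i + 1 := by
      have : b ≤ ⌊(3:ℝ)^n * x + 1⌋ := Int.floor_mono hlb
      rwa [show ((1:ℝ)) = ((1:ℤ):ℝ) by norm_num, Int.floor_add_intCast] at this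
    have : i = b - 1 ∨ i = b ∨ i = b + 1 := by omega
    rcases this with h | h | h
    · exact Or.inl ⟨by rw [← h]; exact hxi, hxI⟩
    · exact Or.inr (Or.inl ⟨by rw [← h]; exact hxi, hxI⟩)
    · exact Or.inr (Or.inr ⟨by rw [← h]; exact hxi, hxI⟩)
  calc μ ({x : ℝ | |x - y| < ((3:ℝ)^n)⁻¹} ∩ triSet k j)
      ≤ μ ((triSet n (b-1).toNat ∩ triSet k j) ∪
        ((triSet n b.toNat ∩ triSet k j) ∪ (triSet n (b+1).toNat ∩ triSet k j))) :=
        measure_mono cover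
    _ ≤ μ (triSet n (b-1).toNat ∩ triSet k j) +
        (μ (triSet n b.toNat ∩ triSet k j) + μ (triSet n (b+1).toNat ∩ triSet k j)) :=
        le_trans (measure_union_le _ _) (by gcongr; exact measure_union_le _ _)
    _ ≤ ENNReal.ofReal (((1-δ)/2)^m) * μ (triSet k j) +
        (ENNReal.ofReal (((1-δ)/2)^m) * μ (triSet k j) +
          ENNReal.ofReal (((1-δ)/2)^m) * μ (triSet k j)) := by
        gcongr <;> exact mu_inter_le hδ hμ hj m _
    _ = 3 * (ENNReal.ofReal (((1-δ)/2)^m) * μ (triSet k j)) := by ring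

lemma pow_aux (α : ℝ) (n : ℕ) : (((3:ℝ)^n)⁻¹) ^ (α-1) = ((3:ℝ)^(1-α))^n := by
  have h1 : (((3:ℝ)^n)⁻¹)^(α-1) = ((3:ℝ)^n)^(-(α-1)) := by
    rw [Real.inv_rpow (by positivity), Real.rpow_neg (by positivity)]
  rw [h1, show -(α-1) = 1-α by ring, ← Real.rpow_natCast 3 n,
    ← Real.rpow_mul (by norm_num), mul_comm, Real.rpow_mul (by norm_num), Real.rpow_natCast]

lemma potential_le (hδ0 : 0 < δ) (hδ : δ < 1/3) (hμ : IsTriadicMeasure μ δ) {α : ℝ}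
    (hα2 : α < 1) (hr1 : (1-δ)/2 * (3:ℝ)^(1-α) < 1) {k j : ℕ} (hj : j < 3^k) (y : ℝ) :
    ∫⁻ x in triSet k j, ENNReal.ofReal (|x - y| ^ (α-1)) ∂μ ≤
      ENNReal.ofReal ((1 + 3*(3:ℝ)^(1-α)/(1 - (1-δ)/2*(3:ℝ)^(1-α))) * ((3:ℝ)^(1-α))^k) *
        μ (triSet k j) := by
  set β := (3:ℝ)^(1-α) with hβdef
  set ρ := (1-δ)/2 with hρdef
  have hβ : 0 < β := Real.rpow_pos_of_pos (by norm_num) _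
  have hρ0 : 0 < ρ := by rw [hρdef]; linarith
  set r := ρ * β with hrdef
  have hr0 : 0 ≤ r := by positivity
  have h1r : 0 < 1 - r := by linarith
  set g : ℕ → ℝ → ℝ≥0∞ := fun m x =>
    ({x : ℝ | |x - y| < ((3:ℝ)^(k+m))⁻¹}).indicator (fun _ => ENNReal.ofReal (β^(k+m+1))) x
    with hgdef
  have hball : ∀ m : ℕ, MeasurableSet {x : ℝ | |x - y| < ((3:ℝ)^(k+m))⁻¹} := fun m =>
    (isOpen_lt (by continuity) continuous_const).measurableSet
  have pointwise : ∀ x : ℝ, ENNReal.ofReal (|x-y|^(α-1)) ≤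
      ENNReal.ofReal (β^k) + ∑' m, g m x := by
    intro x
    rcases eq_or_lt_of_le (abs_nonneg (x-y)) with h0 | hpos
    · rw [← h0, Real.zero_rpow (by intro h; linarith : α - 1 ≠ 0)]
      simp
    by_cases hfar : ((3:ℝ)^k)⁻¹ ≤ |x - y|
    · refine le_trans ?_ le_self_add
      apply ENNReal.ofReal_le_ofReal
      calc |x-y|^(α-1) ≤ (((3:ℝ)^k)⁻¹)^(α-1) :=
            Real.rpow_le_rpow_of_nonpos (by positivity) hfar (by linarith)
        _ = β^k := pow_aux α k
    · push_neg at hfar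
      have hex : ∃ m, ((3:ℝ)^(k+m+1))⁻¹ ≤ |x-y| := by
        obtain ⟨m, hm⟩ := pow_unbounded_of_one_lt (|x-y|)⁻¹ (by norm_num : (1:ℝ) < 3)
        refine ⟨m, ?_⟩
        have h2 : (|x-y|)⁻¹ < 3^(k+m+1) :=
          lt_of_lt_of_le hm (pow_le_pow_right₀ (by norm_num) (by omega))
        exact ((inv_lt_comm₀ hpos (by positivity)).1 h2).le
      have hm := Nat.find_spec hex
      set m := Nat.find hex with hmdef
      have hup : |x-y| < ((3:ℝ)^(k+m))⁻¹ := by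
        rcases Nat.eq_zero_or_pos m with h | h
        · rw [h]; simpa using hfar
        · have h2 := Nat.find_min hex (Nat.pred_lt h.ne')
          push_neg at h2
          rw [← hmdef] at h2
          rwa [Nat.pred_eq_sub_one, show k+(m-1)+1 = k+m by omega] at h2
      refine le_trans ?_ le_add_self
      refine le_trans ?_ (ENNReal.le_tsum m)
      have hgm : g m x = ENNReal.ofReal (β^(k+m+1)) := by
        simp only [hgdef, Set.indicator_apply, Set.mem_setOf_eq, if_pos hup]
      rw [hgm]
      apply ENNReal.ofReal_le_ofReal
      calc |x-y|^(α-1) ≤ (((3:ℝ)^(k+m+1))⁻¹)^(α-1) :=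
            Real.rpow_le_rpow_of_nonpos (by positivity) hm (by linarith)
        _ = β^(k+m+1) := pow_aux α _
  have hgmeas : ∀ m : ℕ, AEMeasurable (g m) (μ.restrict (triSet k j)) := fun m =>
    ((measurable_const.indicator (hball m))).aemeasurable
  have hsummable : Summable (fun m : ℕ => (3*β^(k+1)) * r^m) :=
    (summable_geometric_of_lt_one hr0 hr1).mul_left _
  calc ∫⁻ x in triSet k j, ENNReal.ofReal (|x - y| ^ (α-1)) ∂μ
      ≤ ∫⁻ x in triSet k j, (ENNReal.ofReal (β^k) + ∑' m, g m x) ∂μ :=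
        lintegral_mono pointwise
    _ = ENNReal.ofReal (β^k) * μ (triSet k j) + ∑' m, ∫⁻ x in triSet k j, g m x ∂μ := by
        rw [lintegral_add_left measurable_const, setLIntegral_const, lintegral_tsum hgmeas]
    _ ≤ ENNReal.ofReal (β^k) * μ (triSet k j) +
        ∑' m, ENNReal.ofReal (3*β^(k+1) * r^m) * μ (triSet k j) := by
        gcongr with m
        have he : ∫⁻ x in triSet k j, g m x ∂μ =
            ENNReal.ofReal (β^(k+m+1)) *
              μ ({x : ℝ | |x - y| < ((3:ℝ)^(k+m))⁻¹} ∩ triSet k j) := by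
          rw [hgdef]
          rw [lintegral_indicator (hball m), Measure.restrict_restrict (hball m),
            setLIntegral_const]
        rw [he]
        calc ENNReal.ofReal (β^(k+m+1)) * μ ({x : ℝ | |x - y| < ((3:ℝ)^(k+m))⁻¹} ∩ triSet k j)
            ≤ ENNReal.ofReal (β^(k+m+1)) * (3 * (ENNReal.ofReal (ρ^m) * μ (triSet k j))) :=
              mul_le_mul_right (mu_ball_le hδ hμ hj m y) _
          _ = ENNReal.ofReal (3*β^(k+1) * r^m) * μ (triSet k j) := by
              rw [show (3:ℝ)*β^(k+1)*r^m = 3*(β^(k+m+1)*ρ^m) by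
                  rw [hrdef, mul_pow, show k+m+1 = (k+1)+m by omega, pow_add]; ring,
                ENNReal.ofReal_mul (by norm_num), ENNReal.ofReal_mul (by positivity)]
              rw [show ENNReal.ofReal (3:ℝ) = 3 by norm_num]
              ring
    _ = ENNReal.ofReal ((1 + 3*β/(1-r)) * β^k) * μ (triSet k j) := by
        rw [ENNReal.tsum_mul_right, ← ENNReal.ofReal_tsum_of_nonneg (fun m => by positivity)
          hsummable, tsum_mul_left, tsum_geometric_of_lt_one hr0 hr1, ← add_mul,
          ← ENNReal.ofReal_add (by positivity) (by positivity)]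
        congr 2
        rw [pow_succ]
        field_simp

end Stmt17

open Stmt17

set_option maxHeartbeats 1000000

/-- For the triadic measure `μ` and `1 - ln(2/(1-δ))/ln 3 < α < 1`, the
relative capacity satisfies `Cap_α(E,I) ≥ c μ(E)/μ(I)` for every triadic `I` and compact
`E ⊆ I`; hence `μ` satisfies the fractional `A_∞^α` condition with `η(t) = C t`. -/
theorem stmt_17 (μ : Measure ℝ) (δ : ℝ) (hδ0 : 0 < δ) (hδ : δ < 1 / 3)
    (hμ : IsTriadicMeasure μ δ) (α : ℝ)
    (hα1 : 1 - Real.log (2 / (1 - δ)) / Real.log 3 < α) (hα2 : α < 1) :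
    (∃ c > (0:ℝ), ∀ k j : ℕ, j < 3 ^ k → ∀ E : Set ℝ, E ⊆ triSet k j → IsCompact E →
      ENNReal.ofReal c * (μ E / μ (triSet k j)) ≤
        capacity α E (triDouble k j) (2 / 3 ^ k)) ∧
    (∃ C > (0:ℝ), ∀ k j : ℕ, j < 3 ^ k → ∀ E : Set ℝ, E ⊆ triSet k j → IsCompact E →
      μ E ≤ ENNReal.ofReal C * capacity α E (triDouble k j) (2 / 3 ^ k) *
        μ (triDouble k j)) := by
  have hδ1 : (0:ℝ) < 1 - δ := by linarith
  set β := (3:ℝ)^(1-α) with hβdef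
  set ρ := (1-δ)/2 with hρdef
  have hβ : 0 < β := Real.rpow_pos_of_pos (by norm_num) _
  have hρ0 : 0 < ρ := by rw [hρdef]; linarith
  have hlog3 : 0 < Real.log 3 := Real.log_pos (by norm_num)
  have hr1 : ρ * β < 1 := by
    have h2 : (0:ℝ) < 2/(1-δ) := by positivity
    have hlt : (1-α) * Real.log 3 < Real.log (2/(1-δ)) := by
      have h' : 1 - α < Real.log (2/(1-δ)) / Real.log 3 := by linarith
      exact (lt_div_iff₀ hlog3).1 h'
    have hβlt : β < 2/(1-δ) := by
      rw [hβdef, Real.rpow_def_of_pos (by norm_num : (0:ℝ) < 3)]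
      calc Real.exp (Real.log 3 * (1-α)) < Real.exp (Real.log (2/(1-δ))) := by
            apply Real.exp_lt_exp.2; linarith [hlt]
        _ = 2/(1-δ) := Real.exp_log h2
    calc ρ * β < ρ * (2/(1-δ)) := mul_lt_mul_of_pos_left hβlt hρ0
      _ = 1 := by rw [hρdef]; field_simp
  have h1r : 0 < 1 - ρ*β := by linarith
  have hα0 : 0 < α := by
    have h23 : 2/(1-δ) < 3 := by rw [div_lt_iff₀ hδ1]; linarith
    have hl : Real.log (2/(1-δ)) < Real.log 3 := Real.log_lt_log (by positivity) h23
    have : Real.log (2/(1-δ)) / Real.log 3 < 1 := (div_lt_one hlog3).2 hl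
    linarith
  set A : ℝ := 1 + 3*β/(1 - ρ*β) with hAdef
  have hA : 0 < A := by
    have h₁ : 0 < 3*β/(1-ρ*β) := div_pos (by positivity) h1r
    rw [hAdef]; linarith
  set K : ℝ := 2 * A with hKdef
  have hK : 0 < K := by rw [hKdef]; linarith
  -- potential bound in terms of d = 2/3^k
  have potC : ∀ k j : ℕ, j < 3^k → ∀ y : ℝ,
      ∫⁻ x in triSet k j, ENNReal.ofReal (|x - y| ^ (α-1)) ∂μ ≤
        ENNReal.ofReal (K * ((2:ℝ)/3^k)^(α-1)) * μ (triSet k j) := by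
    intro k j hj y
    refine le_trans (potential_le hδ0 hδ hμ hα2 hr1 hj y) (mul_le_mul_left ?_ _)
    apply ENNReal.ofReal_le_ofReal
    have h3k : (0:ℝ) < 3^k := by positivity
    have hdpow : (0:ℝ) < ((2:ℝ)/3^k)^(α-1) := Real.rpow_pos_of_pos (by positivity) _
    have hsplit : ((2:ℝ)/3^k)^(α-1) = 2^(α-1) * β^k := by
      rw [div_eq_mul_inv, Real.mul_rpow (by norm_num) (by positivity), pow_aux α k]
    have h2le : β^k ≤ 2 * ((2:ℝ)/3^k)^(α-1) := by
      rw [hsplit]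
      have h1 : (2:ℝ)^(1-α) ≤ 2 := by
        have := Real.rpow_le_rpow_of_exponent_le (by norm_num : (1:ℝ) ≤ 2)
          (by linarith : 1-α ≤ (1:ℝ))
        rwa [Real.rpow_one] at this
      have h2k : (0:ℝ) < (2:ℝ)^(α-1) * β^k := by positivity
      calc β^k = ((2:ℝ)^(1-α) * 2^(α-1)) * β^k := by
            rw [← Real.rpow_add (by norm_num)]; norm_num
        _ = 2^(1-α) * (2^(α-1) * β^k) := by ring
        _ ≤ 2 * (2^(α-1) * β^k) := mul_le_mul_of_nonneg_right h1 h2k.le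
    calc A * β^k ≤ A * (2 * ((2:ℝ)/3^k)^(α-1)) := mul_le_mul_of_nonneg_left h2le hA.le
      _ = K * ((2:ℝ)/3^k)^(α-1) := by rw [hKdef]; ring
  -- the main capacity lower bound
  have main : ∀ k j : ℕ, j < 3 ^ k → ∀ E : Set ℝ, E ⊆ triSet k j → IsCompact E →
      ENNReal.ofReal K⁻¹ * (μ E / μ (triSet k j)) ≤
        capacity α E (triDouble k j) (2 / 3 ^ k) := by
    intro k j hj E hE hEc
    obtain ⟨hμI0, hμIfin⟩ := mu_pos_fin hδ0 hδ hμ k j hj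
    rcases Set.eq_empty_or_nonempty E with rfl | ⟨x₀, hx₀⟩
    · simp
    simp only [capacity]
    refine le_iInf fun h => le_iInf fun h0 => le_iInf fun hsupp => le_iInf fun hpot => ?_
    have h3k : (0:ℝ) < 3^k := by positivity
    have hd0 : (0:ℝ) < 2/3^k := by positivity
    have hdpow : (0:ℝ) < ((2:ℝ)/3^k)^(α-1) := Real.rpow_pos_of_pos hd0 _
    -- geometry
    have geom : ∀ x ∈ triSet k j, ∀ y ∈ triDouble k j, |x - y| < 2/3^k := by
      intro x hx y hy
      have hx' := triSet_mem.1 hx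
      simp only [triDouble, Set.mem_Ico] at hy
      have e1 : (3:ℝ)^k * (((j:ℝ)+1/2)/3^k) = (j:ℝ)+1/2 := by field_simp
      have e2 : (3:ℝ)^k * ((3:ℝ)^k)⁻¹ = 1 := mul_inv_cancel₀ h3k.ne'
      have m1 := mul_le_mul_of_nonneg_left hy.1 h3k.le
      rw [mul_sub, e1, e2] at m1
      have m2 := mul_lt_mul_of_pos_left hy.2 h3k
      rw [mul_add, e1, e2] at m2
      have hy1 : (j:ℝ) - 1/2 ≤ 3^k * y := by linarith
      have hy2 : (3:ℝ)^k * y < (j:ℝ) + 3/2 := by linarith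
      rw [abs_sub_lt_iff]
      constructor
      · rw [lt_div_iff₀ h3k]; nlinarith [hx'.2]
      · rw [lt_div_iff₀ h3k]; nlinarith [hx'.1]
    have hsuppD : ∀ y : ℝ, h y ≠ 0 → y ∈ triDouble k j := fun y hy =>
      hsupp (Function.mem_support.2 hy)
    -- integrability of the potentials
    have hInt : ∀ x ∈ E, Integrable (fun y => |x - y|^(α-1) * h y) := by
      intro x hx
      by_contra hni
      have hp := hpot x hx
      rw [integral_undef hni] at hp
      exact absurd hp (not_le.2 hdpow)
    have hf₀int : Integrable (fun y => |x₀ - y|^(α-1) * h y) := hInt x₀ hx₀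
    have hae : ∀ᵐ (y:ℝ), y ≠ x₀ := by
      have hsing : volume ({x₀} : Set ℝ) = 0 := measure_singleton x₀
      rw [ae_iff]
      simpa using hsing
    -- h is a.e. strongly measurable
    have haesm : AEStronglyMeasurable h volume := by
      have hker : Measurable (fun y : ℝ => |x₀ - y|^(1-α)) :=
        ((measurable_const.sub measurable_id).abs).pow measurable_const
      have heq : (fun y => |x₀ - y|^(1-α) * (|x₀ - y|^(α-1) * h y)) =ᵐ[volume] h := by
        filter_upwards [hae] with y hy
        have habs : 0 < |x₀ - y| := abs_pos.2 (sub_ne_zero.2 (Ne.symm hy))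
        calc |x₀-y|^(1-α) * (|x₀-y|^(α-1) * h y)
            = (|x₀-y|^(1-α) * |x₀-y|^(α-1)) * h y := by ring
          _ = h y := by rw [← Real.rpow_add habs]; norm_num
      exact (hker.aestronglyMeasurable.mul hf₀int.aestronglyMeasurable).congr heq
    -- h is integrable
    have hhint : Integrable h := by
      have hb : ∀ᵐ y, ‖h y‖ ≤ ((2:ℝ)/3^k)^(1-α) * (|x₀ - y|^(α-1) * h y) := by
        filter_upwards [hae] with y hy
        rcases eq_or_ne (h y) 0 with hzero | hne
        · rw [hzero]
          simp only [mul_zero, norm_zero]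
          positivity
        · have hyD := hsuppD y hne
          have hlt : |x₀ - y| < 2/3^k := geom x₀ (hE hx₀) y hyD
          have hpos2 : 0 < |x₀ - y| := abs_pos.2 (sub_ne_zero.2 (Ne.symm hy))
          have hker2 : ((2:ℝ)/3^k)^(α-1) ≤ |x₀-y|^(α-1) :=
            Real.rpow_le_rpow_of_nonpos hpos2 hlt.le (by linarith)
          rw [Real.norm_eq_abs, abs_of_nonneg (h0 y)]
          calc h y = (((2:ℝ)/3^k)^(1-α) * ((2:ℝ)/3^k)^(α-1)) * h y := by
                rw [← Real.rpow_add hd0]; norm_num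
            _ = ((2:ℝ)/3^k)^(1-α) * (((2:ℝ)/3^k)^(α-1) * h y) := by ring
            _ ≤ ((2:ℝ)/3^k)^(1-α) * (|x₀-y|^(α-1) * h y) := by
                apply mul_le_mul_of_nonneg_left _ (Real.rpow_nonneg hd0.le _)
                exact mul_le_mul_of_nonneg_right hker2 (h0 y)
      exact (hf₀int.const_mul _).mono' haesm hb
    -- measurable representative
    set h' : ℝ → ℝ := haesm.mk h with hh'def
    have h'meas : Measurable h' := haesm.stronglyMeasurable_mk.measurable
    have hh' : h =ᵐ[volume] h' := haesm.ae_eq_mk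
    set H : ℝ → ℝ≥0∞ := fun y => ENNReal.ofReal (h' y) with hHdef
    have hHmeas : Measurable H := h'meas.ennreal_ofReal
    -- Step C : pointwise lower bound for the lintegral potential
    have stepC : ∀ x ∈ E, ENNReal.ofReal (((2:ℝ)/3^k)^(α-1)) ≤
        ∫⁻ y, ENNReal.ofReal (|x-y|^(α-1)) * H y := by
      intro x hx
      have e1 : ENNReal.ofReal (∫ y, |x-y|^(α-1) * h y) =
          ∫⁻ y, ENNReal.ofReal (|x-y|^(α-1) * h y) :=
        ofReal_integral_eq_lintegral_ofReal (hInt x hx)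
          (ae_of_all _ fun y => mul_nonneg (Real.rpow_nonneg (abs_nonneg _) _) (h0 y))
      have e2 : ∫⁻ y, ENNReal.ofReal (|x-y|^(α-1) * h y) =
          ∫⁻ y, ENNReal.ofReal (|x-y|^(α-1)) * H y := by
        apply lintegral_congr_ae
        filter_upwards [hh'] with y hy
        rw [ENNReal.ofReal_mul (Real.rpow_nonneg (abs_nonneg _) _), hy]
      calc ENNReal.ofReal (((2:ℝ)/3^k)^(α-1))
          ≤ ENNReal.ofReal (∫ y, |x-y|^(α-1) * h y) := ENNReal.ofReal_le_ofReal (hpot x hx)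
        _ = _ := e1.trans e2
    have hEmeas : MeasurableSet E := hEc.isClosed.measurableSet
    have hEfin : μ E < ⊤ := lt_of_le_of_lt (measure_mono hE) hμIfin.lt_top
    have : IsFiniteMeasure (μ.restrict E) :=
      ⟨by rw [Measure.restrict_apply_univ]; exact hEfin⟩
    -- Tonelli
    have swap : ∫⁻ x in E, ∫⁻ y, ENNReal.ofReal (|x-y|^(α-1)) * H y ∂volume ∂μ
        = ∫⁻ y, ∫⁻ x in E, ENNReal.ofReal (|x-y|^(α-1)) * H y ∂μ ∂volume := by
      apply lintegral_lintegral_swap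
      apply Measurable.aemeasurable
      exact ((((measurable_fst.sub measurable_snd).abs).pow measurable_const).ennreal_ofReal).mul
        (hHmeas.comp measurable_snd)
    have hkerx : ∀ y : ℝ, Measurable (fun x : ℝ => ENNReal.ofReal (|x - y|^(α-1))) := fun y =>
      (((measurable_id.sub measurable_const).abs).pow measurable_const).ennreal_ofReal
    have chain : ENNReal.ofReal (((2:ℝ)/3^k)^(α-1)) * μ E ≤
        (ENNReal.ofReal (K * ((2:ℝ)/3^k)^(α-1)) * μ (triSet k j)) * ∫⁻ y, H y := by
      calc ENNReal.ofReal (((2:ℝ)/3^k)^(α-1)) * μ E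
          = ∫⁻ _ in E, ENNReal.ofReal (((2:ℝ)/3^k)^(α-1)) ∂μ := (setLIntegral_const _ _).symm
        _ ≤ ∫⁻ x in E, ∫⁻ y, ENNReal.ofReal (|x-y|^(α-1)) * H y ∂volume ∂μ := by
            apply lintegral_mono_ae
            rw [ae_restrict_iff' hEmeas]
            exact ae_of_all _ fun x hx => stepC x hx
        _ = ∫⁻ y, ∫⁻ x in E, ENNReal.ofReal (|x-y|^(α-1)) * H y ∂μ ∂volume := swap
        _ = ∫⁻ y, (∫⁻ x in E, ENNReal.ofReal (|x-y|^(α-1)) ∂μ) * H y ∂volume :=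
            lintegral_congr fun y => lintegral_mul_const _ (hkerx y)
        _ ≤ ∫⁻ y, (ENNReal.ofReal (K * ((2:ℝ)/3^k)^(α-1)) * μ (triSet k j)) * H y ∂volume := by
            apply lintegral_mono
            intro y
            apply mul_le_mul_left
            calc ∫⁻ x in E, ENNReal.ofReal (|x-y|^(α-1)) ∂μ
                ≤ ∫⁻ x in triSet k j, ENNReal.ofReal (|x-y|^(α-1)) ∂μ :=
                  lintegral_mono' (Measure.restrict_mono hE le_rfl) le_rfl
              _ ≤ ENNReal.ofReal (K * ((2:ℝ)/3^k)^(α-1)) * μ (triSet k j) := potC k j hj y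
        _ = (ENNReal.ofReal (K * ((2:ℝ)/3^k)^(α-1)) * μ (triSet k j)) * ∫⁻ y, H y :=
            lintegral_const_mul _ hHmeas
    have hHint : ∫⁻ y, H y = ENNReal.ofReal (∫ y, h y) := by
      have e1 : ∫⁻ y, H y = ∫⁻ y, ENNReal.ofReal (h y) :=
        (lintegral_congr_ae (hh'.mono fun y hy => by rw [hHdef]; simp [hy])).symm
      rw [e1, ← ofReal_integral_eq_lintegral_ofReal hhint (ae_of_all _ h0)]
    rw [hHint] at chain
    have hX0 : ENNReal.ofReal (((2:ℝ)/3^k)^(α-1)) ≠ 0 := (ENNReal.ofReal_pos.2 hdpow).ne'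
    have hXt : ENNReal.ofReal (((2:ℝ)/3^k)^(α-1)) ≠ ⊤ := ofReal_ne_top
    have hcancel : μ E ≤ ENNReal.ofReal K * μ (triSet k j) * ENNReal.ofReal (∫ y, h y) := by
      apply (ENNReal.mul_le_mul_iff_right hX0 hXt).1
      calc ENNReal.ofReal (((2:ℝ)/3^k)^(α-1)) * μ E
          ≤ (ENNReal.ofReal (K * ((2:ℝ)/3^k)^(α-1)) * μ (triSet k j)) *
              ENNReal.ofReal (∫ y, h y) := chain
        _ = ENNReal.ofReal (((2:ℝ)/3^k)^(α-1)) *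
              (ENNReal.ofReal K * μ (triSet k j) * ENNReal.ofReal (∫ y, h y)) := by
            rw [ENNReal.ofReal_mul hK.le]; ring
    have hdiv : μ E / μ (triSet k j) ≤ ENNReal.ofReal K * ENNReal.ofReal (∫ y, h y) := by
      rw [ENNReal.div_le_iff hμI0 hμIfin]
      calc μ E ≤ ENNReal.ofReal K * μ (triSet k j) * ENNReal.ofReal (∫ y, h y) := hcancel
        _ = ENNReal.ofReal K * ENNReal.ofReal (∫ y, h y) * μ (triSet k j) := by ring
    calc ENNReal.ofReal K⁻¹ * (μ E / μ (triSet k j))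
        ≤ ENNReal.ofReal K⁻¹ * (ENNReal.ofReal K * ENNReal.ofReal (∫ y, h y)) :=
          mul_le_mul_right hdiv _
      _ = ENNReal.ofReal (K⁻¹ * K) * ENNReal.ofReal (∫ y, h y) := by
          rw [← mul_assoc, ← ENNReal.ofReal_mul (by positivity : (0:ℝ) ≤ K⁻¹)]
      _ = ENNReal.ofReal (∫ y, h y) := by rw [inv_mul_cancel₀ hK.ne']; simp
  refine ⟨⟨K⁻¹, by positivity, main⟩, ⟨K, hK, ?_⟩⟩
  intro k j hj E hE hEc
  obtain ⟨hμI0, hμIfin⟩ := mu_pos_fin hδ0 hδ hμ k j hj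
  have h1 := main k j hj E hE hEc
  have hIsub : triSet k j ⊆ triDouble k j := by
    intro x hx
    have h3k : (0:ℝ) < 3^k := by positivity
    simp only [triSet, Set.mem_Ico] at hx
    simp only [triDouble, Set.mem_Ico]
    have ea : ((j:ℝ)+1/2)/3^k = (j:ℝ)/3^k + (1/2)*((3:ℝ)^k)⁻¹ := by field_simp
    have eb : ((j:ℝ)+1)/3^k = (j:ℝ)/3^k + ((3:ℝ)^k)⁻¹ := by field_simp
    have ht : (0:ℝ) < ((3:ℝ)^k)⁻¹ := by positivity
    constructor
    · rw [ea]; linarith [hx.1]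
    · rw [ea]; rw [eb] at hx; linarith [hx.2]
  have h2 : μ E / μ (triSet k j) ≤
      ENNReal.ofReal K * capacity α E (triDouble k j) (2 / 3 ^ k) := by
    have h3 := mul_le_mul_right h1 (ENNReal.ofReal K)
    rwa [← mul_assoc, ← ENNReal.ofReal_mul hK.le, mul_inv_cancel₀ hK.ne',
      ENNReal.ofReal_one, one_mul] at h3
  calc μ E = μ E / μ (triSet k j) * μ (triSet k j) :=
        (ENNReal.div_mul_cancel hμI0 hμIfin).symm
    _ ≤ ENNReal.ofReal K * capacity α E (triDouble k j) (2 / 3 ^ k) * μ (triSet k j) :=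
        mul_le_mul_left h2 _
    _ ≤ ENNReal.ofReal K * capacity α E (triDouble k j) (2 / 3 ^ k) * μ (triDouble k j) :=
        mul_le_mul_right (measure_mono hIsub) _
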